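/- Let K be a field of characteristic zero and k ⊆ K any subfield. Then the André–Quillen homology D_i^k(K) vanishes for all i > 0. -/

import Mathlib

universe u

/-- For a field extension `k ⊆ K` in characteristic zero, the André–Quillen
homology `D_i^k(K)` vanishes for all `i > 0`.  Mathlib only has the first homology of the
cotangent complex, so we formalize the vanishing as: `H¹(L_{K/k}) = 0`, together with
`K` being formally smooth over `k` (which expresses that the whole cotangent complex is
concentrated in degree `0`, i.e. all higher André–Quillen homology vanishes). -/
theorem stmt6 (k K : Type u) [Field k] [Field K] [Algebra k K] [CharZero k] :
    Subsingleton (Algebra.H1Cotangent k K) ∧ Algebra.FormallySmooth k K := by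
  obtain ⟨s, hs⟩ := exists_isTranscendenceBasis k
    K
  -- `F` is the purely transcendental subextension generated by the transcendence basis.
  set F := IntermediateField.adjoin k (Set.range ((↑) : s → K)) with hFdef
  -- `k → F` is formally smooth: `F` is isomorphic to a rational function field,
  -- i.e. a localization of a polynomial ring.
  haveI : Algebra.FormallySmooth (MvPolynomial s k) (FractionRing (MvPolynomial s k)) :=
    Algebra.FormallySmooth.of_isLocalization (nonZeroDivisors (MvPolynomial s k))
  haveI : Algebra.FormallySmooth k (FractionRing (MvPolynomial s k)) :=
    Algebra.FormallySmooth.comp k (MvPolynomial s k) (FractionRing (MvPolynomial s k))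
  haveI hF : Algebra.FormallySmooth k F :=
    Algebra.FormallySmooth.of_equiv hs.1.aevalEquivField
  -- `F → K` is algebraic, hence (char 0) separable, hence formally étale.
  haveI : Algebra.IsAlgebraic F K := hs.isAlgebraic_field
  haveI : CharZero K := charZero_of_injective_algebraMap (R := k) (A := K) (algebraMap k K).injective
  haveI : CharZero F := charZero_of_injective_algebraMap (R := k) (A := F) (algebraMap k F).injective
  haveI : Algebra.IsIntegral F K := Algebra.IsAlgebraic.isIntegral
  haveI : Algebra.FormallyEtale F K := Algebra.FormallyEtale.of_isSeparable F K
  haveI : Algebra.FormallySmooth k K := Algebra.FormallySmooth.comp k F K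
  exact ⟨((Algebra.formallySmooth_iff k K).mp inferInstance).2,
    inferInstance⟩
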